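/- With φ as above (φ(x) = E_x[e^{-rT}], Pφ = e^r φ·(m^{-1}1_{x=0} + 1_{x≠0})), the process Δ_n := e^{-rn}·φ(S_n)·m^{L_{n-1}}, where L_{n-1} = Σ_{k=0}^{n-1} 1_{S_k = 0} is the local time of the walk at 0 up to time n-1, is a martingale with respect to the natural filtration of the random walk. -/

import Mathlib

open MeasureTheory ProbabilityTheory

/-- auxiliary σ-algebra generated by the first `n` steps -/
def stmt7G {Ω : Type*} (X : ℕ → Ω → ℤ) (n : ℕ) : MeasurableSpace Ω :=
  ⨆ i ∈ {i : ℕ | i < n}, MeasurableSpace.comap (X i) inferInstance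

/-- Let `S n = X₁ + ⋯ + X_n` be an irreducible random walk on ℤ started at `0`
with i.i.d. steps of pmf `p`, let `φ : ℤ → [0,1]` satisfy the eigenvalue relation
`Pφ(x) = e^r φ(x) (m⁻¹ 1_{x=0} + 1_{x≠0})`. Then
`Δ_n = e^{-rn} φ(S_n) m^{L_{n-1}}`, where `L_{n-1} = #{0 ≤ k ≤ n-1 : S_k = 0}`, is a
martingale with respect to the natural filtration of the walk. -/
theorem stmt7 {Ω : Type*} [MeasurableSpace Ω] (μ : Measure Ω) [IsProbabilityMeasure μ]
    (X : ℕ → Ω → ℤ) (hXmeas : ∀ i, Measurable (X i))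
    (hindep : ProbabilityTheory.iIndepFun X μ)
    (hident : ∀ i, Measure.map (X i) μ = Measure.map (X 0) μ)
    (p : ℤ → ℝ) (hp : ∀ y : ℤ, (μ (X 0 ⁻¹' {y})).toReal = p y)
    (S : ℕ → Ω → ℤ) (hS : ∀ n ω, S n ω = ∑ i ∈ Finset.range n, X i ω)
    (hSm : ∀ n, StronglyMeasurable (S n))
    (r m : ℝ) (hr : 0 < r) (hm : 1 < m)
    (φ : ℤ → ℝ) (hφ0 : ∀ x, 0 ≤ φ x) (hφ1 : ∀ x, φ x ≤ 1)
    (heigen : ∀ x : ℤ, ∑' y : ℤ, p (y - x) * φ y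
        = Real.exp r * φ x * (if x = 0 then 1 / m else 1)) :
    Martingale
      (fun (n : ℕ) ω => Real.exp (-r * (n : ℝ)) * φ (S n ω) *
        m ^ ((Finset.range n).filter (fun k => S k ω = 0)).card)
      (Filtration.natural S hSm) μ := by
  classical
  set ℱ := Filtration.natural S hSm with hFdef
  have hmpos : (0 : ℝ) < m := lt_trans one_pos hm
  set Δ : ℕ → Ω → ℝ := fun n ω => Real.exp (-r * (n : ℝ)) * φ (S n ω) *
      m ^ ((Finset.range n).filter (fun k => S k ω = 0)).card with hΔdef
  -- measurability of Δ n with respect to any σ-algebra making S k measurable for k ≤ n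
  have hΔmeas : ∀ (m' : MeasurableSpace Ω) (n : ℕ), (∀ k, k ≤ n → Measurable[m'] (S k)) →
      Measurable[m'] (Δ n) := by
    intro m' n h
    have hcard : Measurable[m'] (fun ω =>
        (((Finset.range n).filter (fun k => S k ω = 0)).card : ℕ)) := by
      have heq : (fun ω => (((Finset.range n).filter (fun k => S k ω = 0)).card : ℕ))
          = fun ω => ∑ k ∈ Finset.range n, if S k ω = 0 then 1 else 0 := by
        funext ω; rw [Finset.card_filter]
      rw [heq]
      refine Finset.measurable_sum _ (fun k hk => ?_)
      refine Measurable.ite ?_ measurable_const measurable_const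
      exact (h k (Finset.mem_range.1 hk).le) (measurableSet_singleton 0)
    exact (measurable_const.mul
        ((measurable_from_top (f := φ)).comp (h n le_rfl))).mul
      ((measurable_from_top (f := fun c : ℕ => m ^ c)).comp hcard)
  -- S k is ℱ n measurable for k ≤ n
  have hSnat : ∀ k n, k ≤ n → Measurable[ℱ n] (S k) := by
    intro k n hkn
    exact ((Filtration.stronglyAdapted_natural hSm k).mono (ℱ.mono hkn)).measurable
  -- adapted
  have hadp : StronglyAdapted ℱ Δ := fun n => (hΔmeas (ℱ n) n (fun k hk => hSnat k n hk)).stronglyMeasurable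
  -- pointwise bound
  have hΔnonneg : ∀ n ω, 0 ≤ Δ n ω := by
    intro n ω
    exact mul_nonneg (mul_nonneg (Real.exp_pos _).le (hφ0 _)) (pow_nonneg hmpos.le _)
  have hΔbound : ∀ n ω, ‖Δ n ω‖ ≤ m ^ n := by
    intro n ω
    rw [Real.norm_eq_abs, abs_of_nonneg (hΔnonneg n ω)]
    have h1 : Real.exp (-r * (n : ℝ)) ≤ 1 := by
      rw [Real.exp_le_one_iff]
      have : (0:ℝ) ≤ r * n := mul_nonneg hr.le (Nat.cast_nonneg n)
      linarith
    have h2 : ((Finset.range n).filter (fun k => S k ω = 0)).card ≤ n := by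
      simpa using (Finset.card_filter_le (Finset.range n) (fun k => S k ω = 0))
    have h3 : m ^ ((Finset.range n).filter (fun k => S k ω = 0)).card ≤ m ^ n :=
      pow_le_pow_right₀ hm.le h2
    calc Real.exp (-r * (n : ℝ)) * φ (S n ω) *
          m ^ ((Finset.range n).filter (fun k => S k ω = 0)).card
        ≤ 1 * m ^ n := by
          refine mul_le_mul ?_ h3 (pow_nonneg hmpos.le _) zero_le_one
          exact mul_le_one₀ h1 (hφ0 _) (hφ1 _)
      _ = m ^ n := one_mul _
  -- integrable
  have hint : ∀ n, Integrable (Δ n) μ := by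
    intro n
    refine ⟨((hΔmeas _ n (fun k _ => (hSm k).measurable)).stronglyMeasurable).aestronglyMeasurable,
      ?_⟩
    exact HasFiniteIntegral.of_bounded (C := m ^ n) (Filter.Eventually.of_forall (hΔbound n))
  refine martingale_nat hadp hint (fun n => ?_)
  haveI : SigmaFinite (μ.trim (ℱ.le n)) := by infer_instance
  refine ae_eq_condExp_of_forall_setIntegral_eq (ℱ.le n) (hint (n+1))
    (fun s _ _ => (hint n).integrableOn) (fun s hs _ => ?_)
    ((hadp n).aestronglyMeasurable)
  -- the σ-algebra generated by X 0, ..., X (n-1)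
  have h𝒢 : stmt7G X n = ⨆ i ∈ {i : ℕ | i < n},
      MeasurableSpace.comap (X i) inferInstance := rfl
  have hXG : ∀ i, i < n → Measurable[stmt7G X n] (X i) := by
    intro i hi
    refine Measurable.of_comap_le ?_
    rw [h𝒢]
    exact le_biSup (fun i => MeasurableSpace.comap (X i) inferInstance)
      (show i ∈ {i : ℕ | i < n} from hi)
  have hSG : ∀ k, k ≤ n → Measurable[stmt7G X n] (S k) := by
    intro k hk
    have hSk : S k = fun ω => ∑ i ∈ Finset.range k, X i ω := funext (hS k)
    rw [hSk]
    exact Finset.measurable_sum _ fun i hi =>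
      hXG i (lt_of_lt_of_le (Finset.mem_range.1 hi) hk)
  have hFG : ℱ n ≤ stmt7G X n := by
    refine iSup₂_le fun j hj => ?_
    exact (hSG j hj).comap_le
  have hGle : stmt7G X n ≤ ‹MeasurableSpace Ω› := by
    rw [h𝒢]; exact iSup₂_le fun i _ => (hXmeas i).comap_le
  -- the main random variables
  set L : Ω → ℕ := fun ω => ((Finset.range (n+1)).filter (fun k => S k ω = 0)).card with hL
  set H : Ω → ℝ := fun ω => Real.exp (-r * ((n : ℝ)+1)) * m ^ L ω with hH
  set G : Ω → ℝ := s.indicator H with hG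
  set W : Ω → ℝ × ℤ := fun ω => (G ω, S n ω) with hW
  have hLG : Measurable[stmt7G X n] L := by
    rw [hL]
    have heq : (fun ω => ((Finset.range (n+1)).filter (fun k => S k ω = 0)).card)
        = fun ω => ∑ k ∈ Finset.range (n+1), if S k ω = 0 then 1 else 0 :=
      funext fun ω => Finset.card_filter _ _
    rw [heq]
    refine Finset.measurable_sum _ (fun k hk => ?_)
    refine Measurable.ite ?_ measurable_const measurable_const
    exact (hSG k (Nat.lt_succ_iff.1 (Finset.mem_range.1 hk))) (measurableSet_singleton 0)
  have hHG : Measurable[stmt7G X n] H :=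
    measurable_const.mul ((measurable_from_top (f := fun c : ℕ => m ^ c)).comp hLG)
  have hGG : Measurable[stmt7G X n] G := hHG.indicator (hFG s hs)
  have hWG : Measurable[stmt7G X n] W := hGG.prodMk (hSG n le_rfl)
  have hWm : Measurable W := hWG.mono hGle le_rfl
  have hGm : Measurable G := hGG.mono hGle le_rfl
  -- independence
  have hIndep : ProbabilityTheory.Indep (stmt7G X n) (MeasurableSpace.comap (X n) inferInstance) μ := by
    have h := ProbabilityTheory.indep_biSup_compl (fun i => (hXmeas i).comap_le) hindep
      {i : ℕ | i < n}
    rw [h𝒢]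
    exact ProbabilityTheory.indep_of_indep_of_le_right h
      (le_biSup (fun i => MeasurableSpace.comap (X i) Int.instMeasurableSpace)
        (show n ∈ {i : ℕ | i < n}ᶜ by simp))
  have hIndepW : IndepFun W (X n) μ :=
    ProbabilityTheory.indep_of_indep_of_le_left hIndep hWG.comap_le
  have hmap : μ.map (fun ω => (W ω, X n ω)) = (μ.map W).prod (μ.map (X n)) :=
    (indepFun_iff_map_prod_eq_prod_map_map hWm.aemeasurable (hXmeas n).aemeasurable).1 hIndepW
  haveI : IsProbabilityMeasure (μ.map W) := Measure.isProbabilityMeasure_map hWm.aemeasurable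
  haveI : IsProbabilityMeasure (μ.map (X n)) := Measure.isProbabilityMeasure_map (hXmeas n).aemeasurable
  haveI : IsProbabilityMeasure (μ.map (X 0)) := Measure.isProbabilityMeasure_map (hXmeas 0).aemeasurable
  set Ψ : (ℝ × ℤ) × ℤ → ℝ := fun q => q.1.1 * φ (q.1.2 + q.2) with hΨ
  have hΨm : Measurable Ψ :=
    (measurable_fst.fst).mul ((measurable_from_top (f := φ)).comp
      ((measurable_fst.snd).add measurable_snd))
  -- bounds
  have hHnonneg : ∀ ω, 0 ≤ H ω := fun ω =>
    mul_nonneg (Real.exp_pos _).le (pow_nonneg hmpos.le _)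
  have hGbound : ∀ ω, |G ω| ≤ Real.exp (-r * ((n : ℝ)+1)) * m ^ (n+1) := by
    intro ω
    have h1 : |G ω| ≤ H ω := by
      rw [hG]
      by_cases hω : ω ∈ s
      · rw [Set.indicator_of_mem hω, abs_of_nonneg (hHnonneg ω)]
      · rw [Set.indicator_of_notMem hω]; simpa using hHnonneg ω
    refine le_trans h1 ?_
    rw [hH]
    refine mul_le_mul_of_nonneg_left ?_ (Real.exp_pos _).le
    refine pow_le_pow_right₀ hm.le ?_
    simpa [hL] using (Finset.card_filter_le (Finset.range (n+1)) (fun k => S k ω = 0))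
  -- integrability
  have hcomp : Integrable (fun ω => Ψ (W ω, X n ω)) μ := by
    refine ⟨(hΨm.comp (hWm.prodMk (hXmeas n))).aestronglyMeasurable, ?_⟩
    refine HasFiniteIntegral.of_bounded (C := Real.exp (-r * ((n : ℝ)+1)) * m ^ (n+1)) ?_
    filter_upwards with ω
    have : ‖Ψ (W ω, X n ω)‖ = |G ω| * |φ (S n ω + X n ω)| := by
      rw [hΨ]; simp [abs_mul, hW]
    rw [this]
    have hφb : |φ (S n ω + X n ω)| ≤ 1 := by
      rw [abs_of_nonneg (hφ0 _)]; exact hφ1 _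
    calc |G ω| * |φ (S n ω + X n ω)| ≤ |G ω| * 1 :=
          mul_le_mul_of_nonneg_left hφb (abs_nonneg _)
      _ = |G ω| := mul_one _
      _ ≤ _ := hGbound ω
  have hΨint : Integrable Ψ ((μ.map W).prod (μ.map (X n))) := by
    rw [← hmap]
    exact (integrable_map_measure hΨm.aestronglyMeasurable
      (hWm.prodMk (hXmeas n)).aemeasurable).2 hcomp
  -- step A : set integral of Δ (n+1) as integral of Ψ
  have hA : ∫ x in s, Δ (n+1) x ∂μ = ∫ ω, Ψ (W ω, X n ω) ∂μ := by
    rw [← integral_indicator (ℱ.le n s hs)]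
    congr 1; funext ω
    by_cases hω : ω ∈ s
    · rw [Set.indicator_of_mem hω]
      have hs' : S (n+1) ω = S n ω + X n ω := by
        rw [hS (n+1) ω, hS n ω, Finset.sum_range_succ]
      simp only [hΨ, hW, hG, Set.indicator_of_mem hω, hH, hΔdef, hL, hs']
      push_cast
      ring
    · simp only [Set.indicator_of_notMem hω, hΨ, hW, hG, Set.indicator_of_notMem hω]
      simp
  -- step B : pass to the product measure
  have hB : ∫ ω, Ψ (W ω, X n ω) ∂μ = ∫ q, Ψ q ∂((μ.map W).prod (μ.map (X n))) := by
    rw [← hmap, integral_map (hWm.prodMk (hXmeas n)).aemeasurable hΨm.aestronglyMeasurable]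
  -- the inner integral
  have hinner : ∀ x : ℤ, ∫ v, φ (x + v) ∂(μ.map (X 0))
      = Real.exp r * φ x * (if x = 0 then 1 / m else 1) := by
    intro x
    have hint2 : Integrable (fun v => φ (x + v)) (μ.map (X 0)) := by
      refine ⟨(measurable_from_top (f := fun v : ℤ => φ (x + v))).aestronglyMeasurable, ?_⟩
      refine HasFiniteIntegral.of_bounded (C := 1) ?_
      filter_upwards with v
      rw [Real.norm_eq_abs, abs_of_nonneg (hφ0 _)]; exact hφ1 _
    rw [integral_countable' hint2]
    have hpt : ∀ y : ℤ, ((μ.map (X 0)) {y}).toReal • φ (x + y) = p y * φ (x + y) := by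
      intro y
      rw [Measure.map_apply (hXmeas 0) (measurableSet_singleton y), hp y, smul_eq_mul]
    simp only [measureReal_def]
    rw [tsum_congr hpt]
    have htsum : ∑' y : ℤ, p y * φ (x + y) = ∑' y : ℤ, p (y - x) * φ y := by
      rw [← Equiv.tsum_eq (Equiv.subRight x) (fun y => p y * φ (x + y))]
      refine tsum_congr (fun z => ?_)
      have hz : x + (z - x) = z := by ring
      simp [Equiv.subRight, hz]
    rw [htsum, heigen x]
  -- step C : compute the inner integral
  have hC : ∫ q, Ψ q ∂((μ.map W).prod (μ.map (X n)))
      = ∫ w : ℝ × ℤ, w.1 * (Real.exp r * φ w.2 * (if w.2 = 0 then 1 / m else 1)) ∂(μ.map W) := by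
    rw [integral_prod _ hΨint]
    congr 1
    funext w
    show ∫ v, w.1 * φ (w.2 + v) ∂(μ.map (X n))
        = w.1 * (Real.exp r * φ w.2 * if w.2 = 0 then 1 / m else 1)
    rw [integral_const_mul, hident n, hinner w.2]
  -- step D : come back to Ω
  have hgm2 : Measurable (fun w : ℝ × ℤ =>
      w.1 * (Real.exp r * φ w.2 * (if w.2 = 0 then 1 / m else 1))) :=
    measurable_fst.mul ((measurable_from_top
      (f := fun x : ℤ => Real.exp r * φ x * (if x = 0 then 1 / m else 1))).comp measurable_snd)
  have hD : ∫ w : ℝ × ℤ, w.1 * (Real.exp r * φ w.2 * (if w.2 = 0 then 1 / m else 1)) ∂(μ.map W)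
      = ∫ ω, G ω * (Real.exp r * φ (S n ω) * (if S n ω = 0 then 1 / m else 1)) ∂μ := by
    rw [integral_map hWm.aemeasurable hgm2.aestronglyMeasurable]
  -- step E : identify with the set integral of Δ n
  have hE : ∫ ω, G ω * (Real.exp r * φ (S n ω) * (if S n ω = 0 then 1 / m else 1)) ∂μ
      = ∫ x in s, Δ n x ∂μ := by
    rw [← integral_indicator (ℱ.le n s hs)]
    congr 1; funext ω
    by_cases hω : ω ∈ s
    · rw [Set.indicator_of_mem hω]
      have hcard : L ω = ((Finset.range n).filter (fun k => S k ω = 0)).card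
          + (if S n ω = 0 then 1 else 0) := by
        show ((Finset.range (n+1)).filter (fun k => S k ω = 0)).card = _
        rw [Finset.range_add_one, Finset.filter_insert]
        by_cases h0 : S n ω = 0
        · rw [if_pos h0, if_pos h0, Finset.card_insert_of_notMem (by simp)]
        · rw [if_neg h0, if_neg h0, add_zero]
      have hexp : Real.exp (-(r * ((n : ℝ)+1))) * Real.exp r = Real.exp (-(r * (n : ℝ))) := by
        rw [← Real.exp_add]; congr 1; ring
      simp only [hG, Set.indicator_of_mem hω, hH, hΔdef, hcard]
      by_cases h0 : S n ω = 0
      · rw [if_pos h0, if_pos h0, pow_add, pow_one]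
        have hm0 : m ≠ 0 := ne_of_gt hmpos
        field_simp
        ring_nf
        ring_nf at hexp
        linear_combination
          (φ (S n ω)) * hexp
      · rw [if_neg h0, if_neg h0, add_zero]
        ring_nf
        ring_nf at hexp
        linear_combination
          (φ (S n ω) * m ^ ((Finset.range n).filter (fun k => S k ω = 0)).card) * hexp
    · simp only [hG, Set.indicator_of_notMem hω]
      simp
  rw [hA, hB, hC, hD, hE]
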